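/- Let (S,<_S,<_lex) be a lexicographically ordered Suslin tree such that the linear order (S,<_lex) is dense. Then (S,<_lex) is 2-entangled if and only if (S,<_lex) is weakly 2-entangled. -/

import Mathlib

noncomputable section

open Set

/-- The ordinal `ω₁`. -/
def omega1 : Ordinal := (Cardinal.aleph 1).ord

/-- A set-theoretic tree: a partial order in which the set of predecessors of every
node is well-ordered by the order. -/
def IsSetTree (T : Type) [PartialOrder T] : Prop :=
  ∀ t : T, IsWellOrder {s : T // s < t} (fun a b => (a : T) < (b : T))

/-- The height of a node: the order type of its set of predecessors. -/
noncomputable def nodeHt {T : Type} [PartialOrder T] (hT : IsSetTree T) (t : T) : Ordinal :=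
  @Ordinal.type {s : T // s < t} (fun a b => (a : T) < (b : T)) (hT t)

-- `restr hT t ξ` is the unique `s ≤ t` of height `ξ` (junk value `t` if there is none).
open Classical in
noncomputable def restr {T : Type} [PartialOrder T] (hT : IsSetTree T) (t : T) (ξ : Ordinal) : T :=
  if h : ∃ s : T, s ≤ t ∧ nodeHt hT s = ξ then h.choose else t

/-- Incomparability in the tree order. -/
def Incomp {T : Type} [PartialOrder T] (s t : T) : Prop := ¬ s ≤ t ∧ ¬ t ≤ s

/-- `Δ(s,t)`: the least `α` such that `s↾α ≠ t↾α`. -/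
noncomputable def delta {T : Type} [PartialOrder T] (hT : IsSetTree T) (s t : T) : Ordinal :=
  sInf {α : Ordinal | restr hT s α ≠ restr hT t α}

/-- A family of linear orders on the levels of the tree, coded as a single relation
relating only nodes of the same height. -/
def IsLevelOrderFamily {T : Type} [PartialOrder T] (hT : IsSetTree T) (lo : T → T → Prop) : Prop :=
  (∀ s t, lo s t → nodeHt hT s = nodeHt hT t) ∧
  (∀ t, ¬ lo t t) ∧
  (∀ s t u, lo s t → lo t u → lo s u) ∧
  (∀ s t, s ≠ t → nodeHt hT s = nodeHt hT t → lo s t ∨ lo t s)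

/-- The lexicographic ordering induced by the level orders `lo`:
`t <lex s` iff `t <_T s`, or `t ⊥ s` and `t↾Δ(t,s) ◁ s↾Δ(t,s)`. -/
def lexLT {T : Type} [PartialOrder T] (hT : IsSetTree T) (lo : T → T → Prop) (t s : T) : Prop :=
  t < s ∨ (Incomp t s ∧ lo (restr hT t (delta hT t s)) (restr hT s (delta hT t s)))

/-- An `ω₁`-tree: height `ω₁` and all levels countable. -/
def IsOmega1Tree {T : Type} [PartialOrder T] (hT : IsSetTree T) : Prop :=
  (∀ t : T, nodeHt hT t < omega1) ∧
  (∀ α : Ordinal, α < omega1 → ∃ t : T, nodeHt hT t = α) ∧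
  (∀ α : Ordinal, {t : T | nodeHt hT t = α}.Countable)

def NoUncountableChain (T : Type) [PartialOrder T] : Prop :=
  ∀ C : Set T, IsChain (· ≤ ·) C → C.Countable

def NoUncountableAntichain (T : Type) [PartialOrder T] : Prop :=
  ∀ A : Set T, (∀ s ∈ A, ∀ t ∈ A, s ≠ t → Incomp s t) → A.Countable

/-- An Aronszajn tree: an `ω₁`-tree with no uncountable chains. -/
def IsAronszajnTree {T : Type} [PartialOrder T] (hT : IsSetTree T) : Prop :=
  IsOmega1Tree hT ∧ NoUncountableChain T

/-- A Suslin tree: an `ω₁`-tree with no uncountable chains and no uncountable antichains. -/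
def IsSuslinTree {T : Type} [PartialOrder T] (hT : IsSetTree T) : Prop :=
  IsOmega1Tree hT ∧ NoUncountableChain T ∧ NoUncountableAntichain T

/-- A family of pairs is pairwise disjoint if distinct members are disjoint as sets. -/
def PairwiseDisjointPairs {T : Type} (A : Set (T × T)) : Prop :=
  ∀ a ∈ A, ∀ b ∈ A, a ≠ b → a.1 ≠ b.1 ∧ a.1 ≠ b.2 ∧ a.2 ≠ b.1 ∧ a.2 ≠ b.2

/-- A family of pairs is separated if some `c` lies strictly between the coordinates
of every member. -/
def SeparatedPairs {T : Type} (lt : T → T → Prop) (A : Set (T × T)) : Prop :=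
  ∃ c : T, ∀ a ∈ A, lt a.1 c ∧ lt c a.2

/-- `tpPerp hT lo a b t`: the pair `(a,b)` realizes the type `t` in the lexicographic
order and moreover `a i ⊥ b i` in the tree order, for `i < 2`. (`true` codes `<`.) -/
def tpPerp {T : Type} [PartialOrder T] (hT : IsSetTree T) (lo : T → T → Prop)
    (a b : T × T) (t : Fin 2 → Bool) : Prop :=
  Incomp a.1 b.1 ∧ Incomp a.2 b.2 ∧
  (if t 0 then lexLT hT lo a.1 b.1 else lexLT hT lo b.1 a.1) ∧
  (if t 1 then lexLT hT lo a.2 b.2 else lexLT hT lo b.2 a.2)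

/-- The weakly bi-entangled property of a lexicographically ordered tree. -/
def WeaklyBiEntangled {T : Type} [PartialOrder T] (hT : IsSetTree T) (lo : T → T → Prop) : Prop :=
  ∀ A : Set (T × T), ¬ A.Countable →
    (∀ a ∈ A, lexLT hT lo a.1 a.2) →
    PairwiseDisjointPairs A → SeparatedPairs (lexLT hT lo) A →
    ∃ ξ₀ : Ordinal, ξ₀ < omega1 ∧
      ∀ b ∈ A, ξ₀ ≤ nodeHt hT b.1 → ξ₀ ≤ nodeHt hT b.2 →
        ∀ t : Fin 2 → Bool,
          ∃ a ∈ A, nodeHt hT a.1 < ξ₀ ∧ nodeHt hT a.2 < ξ₀ ∧ tpPerp hT lo a b t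

/-- A normal family of pairs. -/
def NormalFamily {T : Type} [PartialOrder T] (hT : IsSetTree T) (lo : T → T → Prop)
    (B : Set (T × T)) : Prop :=
  ¬ B.Countable ∧
  (∀ b ∈ B, lexLT hT lo b.1 b.2) ∧
  PairwiseDisjointPairs B ∧
  (∀ b ∈ B, nodeHt hT b.1 = nodeHt hT b.2) ∧
  BddAbove {α : Ordinal | ∃ b ∈ B, α = delta hT b.1 b.2} ∧
  sSup {α : Ordinal | ∃ b ∈ B, α = delta hT b.1 b.2} <
    sInf {α : Ordinal | ∃ b ∈ B, α = nodeHt hT b.1} ∧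
  {α : Ordinal | ∃ b ∈ B, α = nodeHt hT b.1} =
    {α : Ordinal | sInf {α : Ordinal | ∃ b ∈ B, α = nodeHt hT b.1} ≤ α ∧ α < omega1}


/-- A binary relation (thought of as a strict linear order) is dense if between any
two related elements there is a third one. -/
def DenseRel {T : Type} (lt : T → T → Prop) : Prop :=
  ∀ a b : T, lt a b → ∃ c : T, lt a c ∧ lt c b

/-- `(T, lt)` is `2`-entangled: for every uncountable pairwise disjoint family of
increasing pairs and every type there are two distinct members realizing the type. -/
def TwoEntangledRel {T : Type} (lt : T → T → Prop) : Prop :=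
  ∀ A : Set (T × T), ¬ A.Countable →
    (∀ a ∈ A, lt a.1 a.2) → PairwiseDisjointPairs A →
    ∀ t : Fin 2 → Bool,
      ∃ a ∈ A, ∃ b ∈ A, a ≠ b ∧
        (if t 0 then lt a.1 b.1 else lt b.1 a.1) ∧
        (if t 1 then lt a.2 b.2 else lt b.2 a.2)

/-- `(T, lt)` is weakly `2`-entangled: the same as `2`-entangled, but only for
separated families. -/
def WeaklyTwoEntangledRel {T : Type} (lt : T → T → Prop) : Prop :=
  ∀ A : Set (T × T), ¬ A.Countable →
    (∀ a ∈ A, lt a.1 a.2) → PairwiseDisjointPairs A → SeparatedPairs lt A →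
    ∀ t : Fin 2 → Bool,
      ∃ a ∈ A, ∃ b ∈ A, a ≠ b ∧
        (if t 0 then lt a.1 b.1 else lt b.1 a.1) ∧
        (if t 1 then lt a.2 b.2 else lt b.2 a.2)

section Basics

variable {S : Type} [PartialOrder S] (hT : IsSetTree S)

lemma nodeHt_eq_typein (t : S) (a : {s : S // s < t}) :
    nodeHt hT a.val = @Ordinal.typein _ (fun x y : {s : S // s < t} => (x : S) < y) (hT t) a := by
  haveI := hT t
  haveI := hT a.val
  rw [← Ordinal.type_subrel]
  unfold nodeHt
  haveI : IsWellOrder _ (Subrel (fun x y : {s : S // s < t} => (x : S) < y)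
      {b | (b : S) < a.val}) := (inferInstanceAs (IsWellOrder _ (Subrel (fun x y : {s : S // s < t} => (x : S) < y) (fun b => (b : S) < a.val))))
  refine Ordinal.type_eq.2 ⟨?_⟩
  exact {
    toFun := fun s => ⟨⟨s.1, lt_trans s.2 a.2⟩, s.2⟩
    invFun := fun b => ⟨b.1.1, b.2⟩
    left_inv := fun s => rfl
    right_inv := fun b => rfl
    map_rel_iff' := Iff.rfl }

lemma nodeHt_lt_of_lt {s t : S} (h : s < t) : nodeHt hT s < nodeHt hT t := by
  haveI := hT t
  have := nodeHt_eq_typein hT t ⟨s, h⟩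
  rw [show nodeHt hT s = nodeHt hT (⟨s, h⟩ : {x : S // x < t}).val from rfl, this]
  exact Ordinal.typein_lt_type _ _

lemma nodeHt_le_of_le {s t : S} (h : s ≤ t) : nodeHt hT s ≤ nodeHt hT t := by
  rcases eq_or_lt_of_le h with rfl | h
  · exact le_rfl
  · exact (nodeHt_lt_of_lt hT h).le

lemma pred_comparable (hT : IsSetTree S) {s s' t : S} (h : s ≤ t) (h' : s' ≤ t) : s ≤ s' ∨ s' ≤ s := by
  rcases eq_or_lt_of_le h with rfl | h
  · exact Or.inr h'
  rcases eq_or_lt_of_le h' with rfl | h'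
  · exact Or.inl h.le
  haveI := hT t
  rcases trichotomous_of (fun x y : {a : S // a < t} => (x : S) < y) ⟨s, h⟩ ⟨s', h'⟩ with
    hh | hh | hh
  · exact Or.inl (le_of_lt hh)
  · exact Or.inl (le_of_eq (congrArg Subtype.val hh))
  · exact Or.inr (le_of_lt hh)

lemma height_unique {s s' t : S} (h : s ≤ t) (h' : s' ≤ t)
    (hn : nodeHt hT s = nodeHt hT s') : s = s' := by
  rcases pred_comparable hT h h' with hh | hh
  · rcases eq_or_lt_of_le hh with rfl | hh
    · rfl
    · exact absurd hn (ne_of_lt (nodeHt_lt_of_lt hT hh))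
  · rcases eq_or_lt_of_le hh with rfl | hh
    · rfl
    · exact absurd hn.symm (ne_of_lt (nodeHt_lt_of_lt hT hh))

lemma exists_le_nodeHt (t : S) {ξ : Ordinal} (h : ξ ≤ nodeHt hT t) :
    ∃ s : S, s ≤ t ∧ nodeHt hT s = ξ := by
  rcases eq_or_lt_of_le h with rfl | h
  · exact ⟨t, le_rfl, rfl⟩
  haveI := hT t
  set r := fun x y : {s : S // s < t} => (x : S) < y with hr
  have hξ : ξ < Ordinal.type r := h
  refine ⟨(Ordinal.enum r ⟨ξ, hξ⟩).val, le_of_lt (Ordinal.enum r ⟨ξ, hξ⟩).2, ?_⟩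
  rw [nodeHt_eq_typein hT t]
  exact Ordinal.typein_enum r hξ

lemma restr_spec {t : S} {ξ : Ordinal} (h : ξ ≤ nodeHt hT t) :
    restr hT t ξ ≤ t ∧ nodeHt hT (restr hT t ξ) = ξ := by
  have hex := exists_le_nodeHt hT t h
  rw [restr, dif_pos hex]
  exact hex.choose_spec

lemma restr_eq_of {s t : S} {ξ : Ordinal} (hs : s ≤ t) (hn : nodeHt hT s = ξ) :
    restr hT t ξ = s := by
  have h : ξ ≤ nodeHt hT t := hn ▸ nodeHt_le_of_le hT hs
  exact height_unique hT (restr_spec hT h).1 hs ((restr_spec hT h).2.trans hn.symm)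

lemma restr_self (t : S) : restr hT t (nodeHt hT t) = t := restr_eq_of hT le_rfl rfl

lemma restr_gt {t : S} {ξ : Ordinal} (h : nodeHt hT t < ξ) : restr hT t ξ = t := by
  rw [restr, dif_neg]
  rintro ⟨s, hs, hn⟩
  exact absurd (hn ▸ nodeHt_le_of_le hT hs) (not_le.2 h)

lemma restr_le (t : S) (ξ : Ordinal) : restr hT t ξ ≤ t := by
  rcases le_or_gt ξ (nodeHt hT t) with h | h
  · exact (restr_spec hT h).1
  · exact (restr_gt hT h).le

lemma restr_compat {u x : S} {ξ : Ordinal} (hux : u ≤ x) (hξ : ξ ≤ nodeHt hT u) :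
    restr hT x ξ = restr hT u ξ :=
  restr_eq_of hT ((restr_spec hT hξ).1.trans hux) (restr_spec hT hξ).2

end Basics
section Delta

variable {S : Type} [PartialOrder S] (hT : IsSetTree S)

lemma delta_set_nonempty {s t : S} (hst : s ≠ t) :
    {α : Ordinal | restr hT s α ≠ restr hT t α}.Nonempty := by
  refine ⟨Order.succ (max (nodeHt hT s) (nodeHt hT t)), ?_⟩
  have h1 : restr hT s (Order.succ (max (nodeHt hT s) (nodeHt hT t))) = s :=
    restr_gt hT (Order.lt_succ_of_le (le_max_left _ _))
  have h2 : restr hT t (Order.succ (max (nodeHt hT s) (nodeHt hT t))) = t :=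
    restr_gt hT (Order.lt_succ_of_le (le_max_right _ _))
  simp only [Set.mem_setOf_eq, h1, h2]; exact hst

lemma delta_mem {s t : S} (hst : s ≠ t) :
    restr hT s (delta hT s t) ≠ restr hT t (delta hT s t) :=
  csInf_mem (delta_set_nonempty hT hst)

lemma delta_min {s t : S} {β : Ordinal} (h : β < delta hT s t) :
    restr hT s β = restr hT t β := by
  by_contra hb
  exact absurd (csInf_le' (s := {α : Ordinal | restr hT s α ≠ restr hT t α}) hb) (not_le.2 h)

lemma delta_comm (s t : S) : delta hT s t = delta hT t s := by
  unfold delta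
  congr 1
  ext α
  exact ne_comm

lemma delta_eq {s t : S} {δ : Ordinal} (hlow : ∀ β < δ, restr hT s β = restr hT t β)
    (hne : restr hT s δ ≠ restr hT t δ) : delta hT s t = δ := by
  refine le_antisymm (csInf_le' hne) (le_csInf ⟨δ, hne⟩ fun β hβ => ?_)
  by_contra h
  exact hβ (hlow β (not_le.1 h))

lemma delta_le_ht_left {s t : S} (h : ¬ s ≤ t) : delta hT s t ≤ nodeHt hT s := by
  by_contra hd
  push_neg at hd
  have h1 : restr hT s (nodeHt hT s) = s := restr_self hT s
  have h2 : restr hT t (nodeHt hT s) = s := (delta_min hT hd).symm.trans h1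
  exact h (h2 ▸ restr_le hT t (nodeHt hT s))

lemma delta_le_ht_right {s t : S} (h : ¬ t ≤ s) : delta hT s t ≤ nodeHt hT t := by
  rw [delta_comm]
  exact delta_le_ht_left hT h

end Delta

section LexOrder

variable {S : Type} [PartialOrder S] {hT : IsSetTree S} {lo : S → S → Prop}

lemma incomp_symm {s t : S} (h : Incomp s t) : Incomp t s := ⟨h.2, h.1⟩

lemma incomp_ne {s t : S} (h : Incomp s t) : s ≠ t := fun e => h.1 (le_of_eq e)

lemma lo_asymm (hlo : IsLevelOrderFamily hT lo) {a b : S} (h : lo a b) : ¬ lo b a :=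
  fun h' => hlo.2.1 a (hlo.2.2.1 a b a h h')

lemma lo_ne (hlo : IsLevelOrderFamily hT lo) {a b : S} (h : lo a b) : a ≠ b := by
  rintro rfl; exact hlo.2.1 a h

lemma lex_irrefl (hT : IsSetTree S) (lo : S → S → Prop) (hlo : IsLevelOrderFamily hT lo)
    (t : S) : ¬ lexLT hT lo t t := by
  rintro (h | ⟨⟨h1, _⟩, _⟩)
  · exact lt_irrefl t h
  · exact h1 le_rfl

lemma lex_ne (hlo : IsLevelOrderFamily hT lo) {u v : S} (h : lexLT hT lo u v) : u ≠ v := by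
  rintro rfl; exact lex_irrefl hT lo hlo u h

lemma lex_of_lt {u v : S} (h : u < v) : lexLT hT lo u v := Or.inl h

lemma lex_asymm (hlo : IsLevelOrderFamily hT lo) {u v : S}
    (h : lexLT hT lo u v) (h' : lexLT hT lo v u) : False := by
  rcases h with h | ⟨i1, l1⟩ <;> rcases h' with h' | ⟨i2, l2⟩
  · exact lt_irrefl u (h.trans h')
  · exact i2.2 h.le
  · exact i1.2 h'.le
  · rw [delta_comm hT v u] at l2
    exact lo_asymm hlo l1 l2

lemma lex_total (hlo : IsLevelOrderFamily hT lo) {u v : S} (huv : u ≠ v) :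
    lexLT hT lo u v ∨ lexLT hT lo v u := by
  by_cases h1 : u ≤ v
  · exact Or.inl (Or.inl (lt_of_le_of_ne h1 huv))
  by_cases h2 : v ≤ u
  · exact Or.inr (Or.inl (lt_of_le_of_ne h2 (Ne.symm huv)))
  have hδu : delta hT u v ≤ nodeHt hT u := delta_le_ht_left hT h1
  have hδv : delta hT u v ≤ nodeHt hT v := delta_le_ht_right hT h2
  have hne := delta_mem hT huv
  have hht : nodeHt hT (restr hT u (delta hT u v)) = nodeHt hT (restr hT v (delta hT u v)) :=
    (restr_spec hT hδu).2.trans (restr_spec hT hδv).2.symm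
  rcases hlo.2.2.2 _ _ hne hht with h | h
  · exact Or.inl (Or.inr ⟨⟨h1, h2⟩, h⟩)
  · refine Or.inr (Or.inr ⟨⟨h2, h1⟩, ?_⟩)
    rw [delta_comm hT v u]
    exact h

/-- Key cone lemma: extensions of `u` keep the same relation to things incomparable to `u`. -/
lemma lex_cone {u x t : S} (hT : IsSetTree S) (hux : u ≤ x) (hut : Incomp u t) :
    Incomp x t ∧ delta hT x t = delta hT u t ∧
      restr hT x (delta hT u t) = restr hT u (delta hT u t) := by
  have hδu : delta hT u t ≤ nodeHt hT u := delta_le_ht_left hT hut.1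
  have hδt : delta hT u t ≤ nodeHt hT t := delta_le_ht_right hT hut.2
  have hrx : restr hT x (delta hT u t) = restr hT u (delta hT u t) := restr_compat hT hux hδu
  have hne := delta_mem hT (incomp_ne hut)
  have hxt : Incomp x t := by
    constructor
    · intro h
      exact hut.1 (hux.trans h)
    · intro h
      rcases pred_comparable hT hux h with hh | hh
      · exact hut.1 hh
      · exact hut.2 hh
  refine ⟨hxt, ?_, hrx⟩
  refine delta_eq hT (fun β hβ => ?_) (by rw [hrx]; exact hne)
  rw [restr_compat hT hux (le_of_lt (lt_of_lt_of_le hβ hδu))]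
  exact delta_min hT hβ

lemma lex_cone_right (hlo : IsLevelOrderFamily hT lo) {u x t : S}
    (hut : Incomp u t) (hlex : lexLT hT lo u t) (hux : u ≤ x) : lexLT hT lo x t := by
  obtain ⟨hxt, hd, hr⟩ := lex_cone hT hux hut
  rcases hlex with h | ⟨_, l⟩
  · exact absurd h.le hut.1
  · exact Or.inr ⟨hxt, by rw [hd, hr]; exact l⟩

lemma lex_cone_left (hlo : IsLevelOrderFamily hT lo) {u x t : S}
    (htu : lexLT hT lo t u) (hux : u ≤ x) : lexLT hT lo t x := by
  rcases htu with h | ⟨i, l⟩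
  · exact Or.inl (lt_of_lt_of_le h hux)
  obtain ⟨hxt, hd, hr⟩ := lex_cone hT hux (incomp_symm i)
  refine Or.inr ⟨incomp_symm hxt, ?_⟩
  rw [delta_comm hT t x, hd, delta_comm hT u t] at *
  rw [hr]
  exact l

end LexOrder
section LexTrans

variable {S : Type} [PartialOrder S] {hT : IsSetTree S} {lo : S → S → Prop}

lemma lex_trans (hlo : IsLevelOrderFamily hT lo) {u v w : S}
    (h1 : lexLT hT lo u v) (h2 : lexLT hT lo v w) : lexLT hT lo u w := by
  rcases h1 with h1 | ⟨i1, l1⟩ <;> rcases h2 with h2 | ⟨i2, l2⟩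
  · exact Or.inl (h1.trans h2)
  · -- u < v, Incomp v w
    -- either u < w (tree) or Incomp u w with same delta as (v,w)
    by_cases huw : u ≤ w
    · have hne : u ≠ w := by
        rintro rfl
        exact i2.2 h1.le
      exact Or.inl (lt_of_le_of_ne huw hne)
    have hwu : ¬ w ≤ u := fun h => i2.2 (h.trans h1.le)
    set δ := delta hT v w with hδ
    have hδv : δ ≤ nodeHt hT v := delta_le_ht_left hT i2.1
    have hδw : δ ≤ nodeHt hT w := delta_le_ht_right hT i2.2
    have hmem := delta_mem hT (incomp_ne i2)
    have hδu : δ ≤ nodeHt hT u := by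
      by_contra hd
      push_neg at hd
      have e1 : restr hT v (nodeHt hT u) = restr hT u (nodeHt hT u) :=
        restr_compat hT h1.le le_rfl
      have e2 : restr hT v (nodeHt hT u) = restr hT w (nodeHt hT u) := delta_min hT hd
      have : u = restr hT w (nodeHt hT u) := by
        rw [← e2, e1, restr_self]
      exact huw (this ▸ restr_le hT w (nodeHt hT u))
    have huvδ : restr hT u δ = restr hT v δ := (restr_compat hT h1.le hδu).symm
    have hdu : delta hT u w = δ := by
      refine delta_eq hT (fun β hβ => ?_) (by rw [huvδ]; exact hmem)
      rw [(restr_compat hT h1.le (le_of_lt (lt_of_lt_of_le hβ hδu))).symm]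
      exact delta_min hT hβ
    exact Or.inr ⟨⟨huw, hwu⟩, by rw [hdu, huvδ]; exact l2⟩
  · -- Incomp u v, v < w
    have huw : ¬ u ≤ w := by
      intro h
      rcases pred_comparable hT h h2.le with hh | hh
      · exact i1.1 hh
      · exact i1.2 hh
    have hwu : ¬ w ≤ u := fun h => i1.2 (h2.le.trans h)
    set δ := delta hT u v with hδ
    have hδu : δ ≤ nodeHt hT u := delta_le_ht_left hT i1.1
    have hδv : δ ≤ nodeHt hT v := delta_le_ht_right hT i1.2
    have hmem := delta_mem hT (incomp_ne i1)
    have hwvδ : restr hT w δ = restr hT v δ := restr_compat hT h2.le hδv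
    have hdu : delta hT u w = δ := by
      refine delta_eq hT (fun β hβ => ?_) (by rw [hwvδ]; exact hmem)
      rw [restr_compat hT h2.le (le_of_lt (lt_of_lt_of_le hβ hδv))]
      exact delta_min hT hβ
    exact Or.inr ⟨⟨huw, hwu⟩, by rw [hdu, hwvδ]; exact l1⟩
  · -- Incomp u v, Incomp v w
    have hδ1u : delta hT u v ≤ nodeHt hT u := delta_le_ht_left hT i1.1
    have hδ1v : delta hT u v ≤ nodeHt hT v := delta_le_ht_right hT i1.2
    have hδ2v : delta hT v w ≤ nodeHt hT v := delta_le_ht_left hT i2.1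
    have hδ2w : delta hT v w ≤ nodeHt hT w := delta_le_ht_right hT i2.2
    have hm1 := delta_mem hT (incomp_ne i1)
    have hm2 := delta_mem hT (incomp_ne i2)
    rcases lt_trichotomy (delta hT u v) (delta hT v w) with hlt | heq | hgt
    · -- δ1 < δ2 : u vs w decided at δ1 like u vs v
      have hwv : restr hT w (delta hT u v) = restr hT v (delta hT u v) :=
        (delta_min hT hlt).symm
      have hneuw : restr hT u (delta hT u v) ≠ restr hT w (delta hT u v) := by
        rw [hwv]; exact hm1
      have huw : ¬ u ≤ w := fun h => hneuw (restr_compat hT h hδ1u).symm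
      have hwu : ¬ w ≤ u := fun h => hneuw (restr_compat hT h (hlt.le.trans hδ2w))
      have hdu : delta hT u w = delta hT u v := by
        refine delta_eq hT (fun β hβ => ?_) hneuw
        rw [delta_min hT hβ]
        exact delta_min hT (hβ.trans hlt)
      exact Or.inr ⟨⟨huw, hwu⟩, by rw [hdu, hwv]; exact l1⟩
    · -- δ1 = δ2
      rw [← heq] at l2 hδ2w hm2
      have hlo1 : lo (restr hT u (delta hT u v)) (restr hT w (delta hT u v)) :=
        hlo.2.2.1 _ _ _ l1 l2
      have hneuw : restr hT u (delta hT u v) ≠ restr hT w (delta hT u v) := lo_ne hlo hlo1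
      have huw : ¬ u ≤ w := fun h => hneuw (restr_compat hT h hδ1u).symm
      have hwu : ¬ w ≤ u := fun h => hneuw (restr_compat hT h hδ2w)
      have hdu : delta hT u w = delta hT u v := by
        refine delta_eq hT (fun β hβ => ?_) hneuw
        rw [delta_min hT hβ]
        exact delta_min hT (heq ▸ hβ)
      exact Or.inr ⟨⟨huw, hwu⟩, by rw [hdu]; exact hlo1⟩
    · -- δ2 < δ1 : u vs w decided at δ2 like v vs w
      have huv : restr hT u (delta hT v w) = restr hT v (delta hT v w) := delta_min hT hgt
      have hneuw : restr hT u (delta hT v w) ≠ restr hT w (delta hT v w) := by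
        rw [huv]; exact hm2
      have huw : ¬ u ≤ w := fun h => hneuw (restr_compat hT h (hgt.le.trans hδ1u)).symm
      have hwu : ¬ w ≤ u := fun h => hneuw (restr_compat hT h hδ2w)
      have hdu : delta hT u w = delta hT v w := by
        refine delta_eq hT (fun β hβ => ?_) hneuw
        rw [delta_min hT (hβ.trans hgt)]
        exact delta_min hT hβ
      exact Or.inr ⟨⟨huw, hwu⟩, by rw [hdu, huv]; exact l2⟩

end LexTrans
section Cone

variable {S : Type} [PartialOrder S] {hT : IsSetTree S} {lo : S → S → Prop}

lemma exists_cone_in_interval (hlo : IsLevelOrderFamily hT lo)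
    (hdense : DenseRel (lexLT hT lo)) {p q : S} (h : lexLT hT lo p q) :
    ∃ u : S, ∀ x : S, u ≤ x → lexLT hT lo p x ∧ lexLT hT lo x q := by
  haveI := hT q
  classical
  set r := fun a b : {x : S // x < q} => (a : S) < b with hr
  have hwf : WellFounded r := (hT q).toIsWellFounded.wf
  by_cases hP : ({s : {x : S // x < q} | lexLT hT lo p s.val}).Nonempty
  · set c₀ := hwf.min _ hP with hc₀
    have hc₀mem : lexLT hT lo p c₀.val := hwf.min_mem _ hP
    obtain ⟨u, hpu, huc⟩ := hdense p c₀.val hc₀mem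
    have huq : lexLT hT lo u q := lex_trans hlo huc (lex_of_lt c₀.2)
    have hultq : ¬ u < q := by
      intro hq
      rcases trichotomous_of r ⟨u, hq⟩ c₀ with hh | hh | hh
      · exact hwf.not_lt_min _ (hpu :
          (⟨u, hq⟩ : {x : S // x < q}) ∈ {s : {x : S // x < q} | lexLT hT lo p s.val}) hh
      · rw [show u = c₀.val from congrArg Subtype.val hh] at huc
        exact lex_irrefl hT lo hlo _ huc
      · exact lex_asymm hlo huc (lex_of_lt (hh : (c₀ : S) < u))
    have hinc : Incomp u q := by
      refine ⟨fun hle => ?_, fun hle => ?_⟩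
      · rcases eq_or_lt_of_le hle with heq | hlt
        · exact lex_irrefl hT lo hlo q (heq ▸ huq)
        · exact hultq hlt
      · rcases eq_or_lt_of_le hle with heq | hlt
        · exact lex_irrefl hT lo hlo u (heq ▸ huq)
        · exact lex_asymm hlo huq (lex_of_lt hlt)
    refine ⟨u, fun x hux => ⟨lex_cone_left hlo hpu hux, lex_cone_right hlo hinc huq hux⟩⟩
  · obtain ⟨u, hpu, huq⟩ := hdense p q h
    have hultq : ¬ u < q := fun hq => hP ⟨⟨u, hq⟩, hpu⟩
    have hinc : Incomp u q := by
      refine ⟨fun hle => ?_, fun hle => ?_⟩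
      · rcases eq_or_lt_of_le hle with heq | hlt
        · exact lex_irrefl hT lo hlo q (heq ▸ huq)
        · exact hultq hlt
      · rcases eq_or_lt_of_le hle with heq | hlt
        · exact lex_irrefl hT lo hlo u (heq ▸ huq)
        · exact lex_asymm hlo huq (lex_of_lt hlt)
    refine ⟨u, fun x hux => ⟨lex_cone_left hlo hpu hux, lex_cone_right hlo hinc huq hux⟩⟩

/-- The interval `(i.1, i.2)` in the lexicographic order. -/
def InInt {T : Type} [PartialOrder T] (hT : IsSetTree T) (lo : T → T → Prop)
    (i : T × T) (z : T) : Prop :=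
  lexLT hT lo i.1 z ∧ lexLT hT lo z i.2

lemma suslin_ccc (hlo : IsLevelOrderFamily hT lo) (hSus : IsSuslinTree hT)
    (hdense : DenseRel (lexLT hT lo)) (I : Set (S × S))
    (hI : ∀ i ∈ I, lexLT hT lo i.1 i.2)
    (hdisj : ∀ i ∈ I, ∀ j ∈ I, i ≠ j → ∀ z : S, ¬ (InInt hT lo i z ∧ InInt hT lo j z)) :
    I.Countable := by
  classical
  set f : S × S → S := fun i =>
    if h : lexLT hT lo i.1 i.2 then (exists_cone_in_interval hlo hdense h).choose else i.1
    with hf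
  have hspec : ∀ i ∈ I, ∀ x : S, f i ≤ x → InInt hT lo i x := by
    intro i hi x hx
    rw [hf] at hx
    simp only [dif_pos (hI i hi)] at hx
    exact (exists_cone_in_interval hlo hdense (hI i hi)).choose_spec x hx
  have hinj : Set.InjOn f I := by
    intro i hi j hj hij
    by_contra hne
    exact hdisj i hi j hj hne (f i)
      ⟨hspec i hi (f i) le_rfl, hij ▸ hspec j hj (f j) le_rfl⟩
  have hanti : (f '' I).Countable := by
    apply hSus.2.2
    rintro s ⟨i, hi, rfl⟩ t ⟨j, hj, rfl⟩ hst
    have hij : i ≠ j := fun e => hst (congrArg f e)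
    constructor
    · intro hle
      exact hdisj i hi j hj hij (f j) ⟨hspec i hi (f j) hle, hspec j hj (f j) le_rfl⟩
    · intro hle
      exact hdisj i hi j hj hij (f i) ⟨hspec i hi (f i) le_rfl, hspec j hj (f i) hle⟩
  exact (Set.mapsTo_image f I).countable_of_injOn hinj hanti

end Cone
section Comb

variable {S : Type} [PartialOrder S] {hT : IsSetTree S} {lo : S → S → Prop}

/-- A family of pairs with pairwise disjoint open lex-intervals. -/
def IntDisjFam {T : Type} [PartialOrder T] (hT : IsSetTree T) (lo : T → T → Prop)
    (M : Set (T × T)) : Prop :=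
  ∀ i ∈ M, ∀ j ∈ M, i ≠ j → ∀ z, ¬ (InInt hT lo i z ∧ InInt hT lo j z)

lemma exists_maximal_intdisj (hT : IsSetTree S) (lo : S → S → Prop) (Pfam : Set (S × S)) :
    ∃ M, Maximal (fun M => M ⊆ Pfam ∧ IntDisjFam hT lo M) M := by
  apply zorn_subset
  intro c hc hchain
  refine ⟨⋃₀ c, ⟨?_, ?_⟩, fun s hs => Set.subset_sUnion_of_mem hs⟩
  · exact Set.sUnion_subset fun s hs => (hc hs).1
  · rintro i hi j hj hij z hz
    obtain ⟨s, hs, his⟩ := hi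
    obtain ⟨t', ht', hjt⟩ := hj
    rcases hchain.total hs ht' with hst | hts
    · exact (hc ht').2 i (hst his) j hjt hij z hz
    · exact (hc hs).2 i his j (hts hjt) hij z hz

lemma pdp_mono {T : Type} {A B : Set (T × T)} (h : B ⊆ A) (hA : PairwiseDisjointPairs A) :
    PairwiseDisjointPairs B :=
  fun a ha b hb hab => hA a (h ha) b (h hb) hab

/-- An uncountable subset of the lex order in which every point has only countably
many predecessors inside the subset is impossible (ccc + density). -/
lemma no_omega1_like (hlo : IsLevelOrderFamily hT lo) (hSus : IsSuslinTree hT)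
    (hdense : DenseRel (lexLT hT lo)) (X : Set S) (hX : ¬ X.Countable)
    (hpred : ∀ y ∈ X, {x ∈ X | lexLT hT lo x y}.Countable) : False := by
  classical
  set Pfam : Set (S × S) := {i | i.1 ∈ X ∧ i.2 ∈ X ∧ lexLT hT lo i.1 i.2} with hPfam
  obtain ⟨M, hM⟩ := exists_maximal_intdisj hT lo Pfam
  have hMsub : M ⊆ Pfam := hM.prop.1
  have hMdisj : IntDisjFam hT lo M := hM.prop.2
  have hMcnt : M.Countable :=
    suslin_ccc hlo hSus hdense M (fun i hi => (hMsub hi).2.2) hMdisj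
  set E : Set S := (Prod.fst '' M) ∪ (Prod.snd '' M) with hE
  have hEcnt : E.Countable := (hMcnt.image _).union (hMcnt.image _)
  have hEX : E ⊆ X := by
    rintro y (⟨i, hi, rfl⟩ | ⟨i, hi, rfl⟩)
    · exact (hMsub hi).1
    · exact (hMsub hi).2.1
  -- pick a point of X above a countable subset of X
  have pick : ∀ E' : Set S, E' ⊆ X → E'.Countable →
      ∃ x ∈ X, x ∉ E' ∧ ∀ y ∈ E', lexLT hT lo y x := by
    intro E' hE'X hE'cnt
    have hbad : (⋃ y ∈ E', ({x ∈ X | lexLT hT lo x y} ∪ {y})).Countable :=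
      hE'cnt.biUnion fun y hy => (hpred y (hE'X hy)).union (Set.countable_singleton y)
    have hne : (X \ ⋃ y ∈ E', ({x ∈ X | lexLT hT lo x y} ∪ {y})).Nonempty := by
      by_contra h
      rw [Set.not_nonempty_iff_eq_empty, Set.diff_eq_empty] at h
      exact hX (hbad.mono h)
    obtain ⟨x, hxX, hxnb⟩ := hne
    refine ⟨x, hxX, ?_, ?_⟩
    · intro hxE'
      exact hxnb (Set.mem_biUnion hxE' (Or.inr rfl))
    · intro y hy
      have h1 : ¬ (lexLT hT lo x y ∨ x = y) := by
        intro h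
        rcases h with h | h
        · exact hxnb (Set.mem_biUnion hy (Or.inl ⟨hxX, h⟩))
        · exact hxnb (Set.mem_biUnion hy (Or.inr h))
      push_neg at h1
      rcases lex_total hlo (Ne.symm h1.2) with h | h
      · exact h
      · exact absurd h h1.1
  obtain ⟨x, hxX, hxE, hxup⟩ := pick E hEX hEcnt
  obtain ⟨x', hx'X, hx'E, hx'up⟩ := pick (E ∪ {x}) (Set.union_subset hEX (by simpa using hxX))
    (hEcnt.union (Set.countable_singleton x))
  have hxx' : lexLT hT lo x x' := hx'up x (Or.inr rfl)
  set n : S × S := (x, x') with hn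
  have hnP : n ∈ Pfam := ⟨hxX, hx'X, hxx'⟩
  have hnM : n ∉ M := by
    intro hmem
    exact hxE (Or.inl ⟨n, hmem, rfl⟩)
  have hext : (insert n M) ⊆ Pfam ∧ IntDisjFam hT lo (insert n M) := by
    refine ⟨Set.insert_subset hnP hMsub, ?_⟩
    have key : ∀ m ∈ M, ∀ z, ¬ (InInt hT lo n z ∧ InInt hT lo m z) := by
      rintro m hm z ⟨⟨hz1, hz2⟩, ⟨hz3, hz4⟩⟩
      -- m.2 ∈ E, so m.2 <lex x, but x <lex z <lex m.2
      have hm2E : m.2 ∈ E := Or.inr ⟨m, hm, rfl⟩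
      have h5 : lexLT hT lo m.2 x := hxup m.2 hm2E
      exact lex_asymm hlo hz1 (lex_trans hlo hz4 h5)
    rintro i hi j hj hij z hz
    rcases hi with rfl | hi
    · rcases hj with rfl | hj
      · exact hij rfl
      · exact key j hj z ⟨hz.1, hz.2⟩
    · rcases hj with rfl | hj
      · exact key i hi z ⟨hz.2, hz.1⟩
      · exact hMdisj i hi j hj hij z hz
  have := hM.2 hext (Set.subset_insert n M)
  exact hnM (this (Set.mem_insert n M))

end Comb
section Main

variable {S : Type} [PartialOrder S] {hT : IsSetTree S} {lo : S → S → Prop}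

lemma exists_aligned (hlo : IsLevelOrderFamily hT lo) (hSus : IsSuslinTree hT)
    (hdense : DenseRel (lexLT hT lo)) (hweak : WeaklyTwoEntangledRel (lexLT hT lo))
    (A : Set (S × S)) (hA : ¬ A.Countable) (hinc : ∀ a ∈ A, lexLT hT lo a.1 a.2)
    (hpd : PairwiseDisjointPairs A) :
    ∃ a ∈ A, ∃ b ∈ A, a ≠ b ∧ lexLT hT lo a.1 b.1 ∧ lexLT hT lo a.2 b.2 := by
  by_contra hno
  push_neg at hno
  -- structure: any two distinct members are nested
  have hnest : ∀ a ∈ A, ∀ b ∈ A, a ≠ b → lexLT hT lo b.1 a.1 → lexLT hT lo a.2 b.2 := by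
    intro a ha b hb hab h1
    have hne2 : b.2 ≠ a.2 := (hpd b hb a ha (Ne.symm hab)).2.2.2
    rcases lex_total hlo hne2 with h | h
    · exact absurd h (hno b hb a ha (Ne.symm hab) h1)
    · exact h
  by_cases hcase : ∃ c ∈ A, ¬ {b ∈ A | lexLT hT lo b.1 c.1}.Countable
  · obtain ⟨c, hc, hBunc⟩ := hcase
    set B := {b ∈ A | lexLT hT lo b.1 c.1} with hB
    have hBsub : B ⊆ A := fun b hb => hb.1
    have hBsep : SeparatedPairs (lexLT hT lo) B := by
      refine ⟨c.1, fun b hb => ⟨hb.2, ?_⟩⟩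
      have hbc : b ≠ c := by
        rintro rfl
        exact lex_irrefl hT lo hlo b.1 hb.2
      have := hnest c hc b hb.1 (Ne.symm hbc) hb.2
      exact lex_trans hlo (hinc c hc) this
    obtain ⟨a, ha, b, hb, hab, h1, h2⟩ :=
      hweak B hBunc (fun b hb => hinc b (hBsub hb)) (pdp_mono hBsub hpd) hBsep
        (fun _ => true)
    simp only [if_true] at h1 h2
    exact hno a (hBsub ha) b (hBsub hb) hab h1 h2
  · push_neg at hcase
    have hXunc : ¬ (Prod.fst '' A).Countable := by
      intro h
      exact hA ((Set.mapsTo_image _ _).countable_of_injOn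
        (fun a ha b hb he => by
          by_contra hne
          exact (hpd a ha b hb hne).1 he) h)
    refine no_omega1_like hlo hSus hdense (Prod.fst '' A) hXunc ?_
    rintro y ⟨c, hc, rfl⟩
    have : {x ∈ Prod.fst '' A | lexLT hT lo x c.1} ⊆
        Prod.fst '' {b ∈ A | lexLT hT lo b.1 c.1} := by
      rintro x ⟨⟨b, hb, rfl⟩, hx⟩
      exact ⟨b, ⟨hb, hx⟩, rfl⟩
    exact (((hcase c hc).image _).mono this)

lemma exists_nested (hlo : IsLevelOrderFamily hT lo) (hSus : IsSuslinTree hT)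
    (hdense : DenseRel (lexLT hT lo)) (hweak : WeaklyTwoEntangledRel (lexLT hT lo))
    (A : Set (S × S)) (hA : ¬ A.Countable) (hinc : ∀ a ∈ A, lexLT hT lo a.1 a.2)
    (hpd : PairwiseDisjointPairs A) :
    ∃ a ∈ A, ∃ b ∈ A, a ≠ b ∧ lexLT hT lo a.1 b.1 ∧ lexLT hT lo b.2 a.2 := by
  classical
  by_contra hno
  push_neg at hno
  -- structure: any two distinct members are aligned
  have halign : ∀ a ∈ A, ∀ b ∈ A, a ≠ b → lexLT hT lo a.1 b.1 → lexLT hT lo a.2 b.2 := by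
    intro a ha b hb hab h1
    have hne2 : a.2 ≠ b.2 := (hpd a ha b hb hab).2.2.2
    rcases lex_total hlo hne2 with h | h
    · exact h
    · exact absurd h (hno a ha b hb hab h1)
  by_cases hcase : ∃ z : S, ¬ {a ∈ A | InInt hT lo a z}.Countable
  · obtain ⟨z, hBunc⟩ := hcase
    set B := {a ∈ A | InInt hT lo a z} with hB
    have hBsub : B ⊆ A := fun b hb => hb.1
    have hBsep : SeparatedPairs (lexLT hT lo) B := ⟨z, fun a ha => ⟨ha.2.1, ha.2.2⟩⟩
    obtain ⟨a, ha, b, hb, hab, h1, h2⟩ :=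
      hweak B hBunc (fun b hb => hinc b (hBsub hb)) (pdp_mono hBsub hpd) hBsep
        (fun i => decide (i = 0))
    norm_num at h1 h2
    exact hno a (hBsub ha) b (hBsub hb) hab h1 h2
  · push_neg at hcase
    obtain ⟨M, hM⟩ := exists_maximal_intdisj hT lo A
    have hMsub : M ⊆ A := hM.prop.1
    have hMdisj : IntDisjFam hT lo M := hM.prop.2
    have hMcnt : M.Countable :=
      suslin_ccc hlo hSus hdense M (fun i hi => hinc i (hMsub hi)) hMdisj
    have hcover : A ⊆ M ∪ ⋃ m ∈ M,
        ({a ∈ A | InInt hT lo a m.1} ∪ {a ∈ A | InInt hT lo a m.2}) := by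
      intro a ha
      by_contra hnot
      rw [Set.mem_union] at hnot
      push_neg at hnot
      obtain ⟨haM, haU⟩ := hnot
      -- a's interval is disjoint from every m ∈ M's interval
      have hdisj : IntDisjFam hT lo (insert a M) := by
        have key : ∀ m ∈ M, ∀ z, ¬ (InInt hT lo a z ∧ InInt hT lo m z) := by
          rintro m hm z ⟨⟨hz1, hz2⟩, ⟨hz3, hz4⟩⟩
          have hma : m ≠ a := fun e => haM (e ▸ hm)
          have hne1 : a.1 ≠ m.1 := (hpd a ha m (hMsub hm) (Ne.symm hma)).1
          have hnotin : a ∉ ⋃ m ∈ M,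
              ({a ∈ A | InInt hT lo a m.1} ∪ {a ∈ A | InInt hT lo a m.2}) := haU
          rcases lex_total hlo hne1 with h | h
          · -- a.1 <lex m.1 : then m.1 ∈ I_a
            exact hnotin (Set.mem_biUnion hm
              (Or.inl ⟨ha, h, lex_trans hlo hz3 hz2⟩))
          · -- m.1 <lex a.1 : then m.2 ∈ I_a
            have h22 : lexLT hT lo m.2 a.2 :=
              halign m (hMsub hm) a ha hma h
            exact hnotin (Set.mem_biUnion hm
              (Or.inr ⟨ha, lex_trans hlo hz1 hz4, h22⟩))
        rintro i hi j hj hij z hz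
        rcases hi with rfl | hi
        · rcases hj with rfl | hj
          · exact hij rfl
          · exact key j hj z ⟨hz.1, hz.2⟩
        · rcases hj with rfl | hj
          · exact key i hi z ⟨hz.2, hz.1⟩
          · exact hMdisj i hi j hj hij z hz
      have := hM.2 ⟨Set.insert_subset ha hMsub, hdisj⟩ (Set.subset_insert a M)
      exact haM (this (Set.mem_insert a M))
    exact hA ((hMcnt.union (hMcnt.biUnion fun m hm =>
      (hcase m.1).union (hcase m.2))).mono hcover)

end Main
/-- For a lexicographically ordered Suslin tree whose lexicographic order is dense,
being `2`-entangled is equivalent to being weakly `2`-entangled. -/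
theorem twoEntangled_iff_weaklyTwoEntangled {S : Type} [PartialOrder S]
    (hT : IsSetTree S) (lo : S → S → Prop) (hlo : IsLevelOrderFamily hT lo)
    (hSus : IsSuslinTree hT) (hdense : DenseRel (lexLT hT lo)) :
    TwoEntangledRel (lexLT hT lo) ↔ WeaklyTwoEntangledRel (lexLT hT lo) := by
  constructor
  · intro h2 A hA hinc hpd _hsep t
    exact h2 A hA hinc hpd t
  · intro hweak A hA hinc hpd t
    rcases Bool.eq_false_or_eq_true (t 0) with ht0 | ht0 <;>
      rcases Bool.eq_false_or_eq_true (t 1) with ht1 | ht1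
    · -- t = (<, <) : an aligned pair
      obtain ⟨a, ha, b, hb, hab, h1, h2⟩ :=
        exists_aligned hlo hSus hdense hweak A hA hinc hpd
      refine ⟨a, ha, b, hb, hab, ?_⟩
      simp only [ht0, ht1, if_true, Bool.false_eq_true, if_false]
      exact ⟨h1, h2⟩
    · -- t = (<, >) : a nested pair
      obtain ⟨a, ha, b, hb, hab, h1, h2⟩ :=
        exists_nested hlo hSus hdense hweak A hA hinc hpd
      refine ⟨a, ha, b, hb, hab, ?_⟩
      simp only [ht0, ht1, if_true, Bool.false_eq_true, if_false]
      exact ⟨h1, h2⟩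
    · -- t = (>, <) : swap a nested pair
      obtain ⟨a, ha, b, hb, hab, h1, h2⟩ :=
        exists_nested hlo hSus hdense hweak A hA hinc hpd
      refine ⟨b, hb, a, ha, Ne.symm hab, ?_⟩
      simp only [ht0, ht1, if_true, Bool.false_eq_true, if_false]
      exact ⟨h1, h2⟩
    · -- t = (>, >) : swap an aligned pair
      obtain ⟨a, ha, b, hb, hab, h1, h2⟩ :=
        exists_aligned hlo hSus hdense hweak A hA hinc hpd
      refine ⟨b, hb, a, ha, Ne.symm hab, ?_⟩
      simp only [ht0, ht1, if_true, Bool.false_eq_true, if_false]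
      exact ⟨h1, h2⟩

end
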